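/- Let f : ℝ^d → ℝ be μ-strongly convex and L-smooth, and suppose at x ∈ ℝ^d we have an inexact oracle (f_δ, g_δ) satisfying, for all y, (μ/2)‖y−x‖² ≤ f(y) − f_δ − ⟨g_δ, y−x⟩ ≤ (L/2)‖y−x‖² + δ. Then for the true gradient, ‖g_δ − ∇f(x)‖² ≤ 2Lδ. -/

import Mathlib

open Set

/-- A convex differentiable function lies above its tangent line. -/
lemma grad_le_sub_aux {d : ℕ} {f : EuclideanSpace ℝ (Fin d) → ℝ}
    (hconv : ConvexOn ℝ Set.univ f) {x g : EuclideanSpace ℝ (Fin d)}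
    (hg : HasGradientAt f g x) (v : EuclideanSpace ℝ (Fin d)) :
    (inner ℝ g v : ℝ) ≤ f (x + v) - f x := by
  set φ : ℝ → ℝ := fun t => f (x + t • v) with hφ
  have hline : ∀ t : ℝ, (AffineMap.lineMap x (x + v) : ℝ →ᵃ[ℝ] _) t = x + t • v := by
    intro t
    simp [AffineMap.lineMap_apply, add_sub_cancel_left]
    module
  have hφconv : ConvexOn ℝ Set.univ φ := by
    have := hconv.comp_affineMap (AffineMap.lineMap x (x + v) : ℝ →ᵃ[ℝ] _)
    convert this.subset (subset_preimage_univ) convex_univ using 1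
    pick_goal -1
    funext t
    simp [φ, hline t]
    all_goals rfl
  have hd : HasDerivAt φ ((inner ℝ g v : ℝ)) 0 := by
    have hF : HasFDerivAt f ((InnerProductSpace.toDual ℝ _) g) x :=
      (hasGradientAt_iff_hasFDerivAt).mp hg
    have hl : HasDerivAt (fun t : ℝ => x + t • v) v 0 := by
      simpa using ((hasDerivAt_id (0:ℝ)).smul_const v).const_add x
    have hF' : HasFDerivAt f ((InnerProductSpace.toDual ℝ _) g) (x + (0:ℝ) • v) := by
      simpa using hF
    have := hF'.comp_hasDerivAt (x := (0:ℝ)) (f := fun t : ℝ => x + t • v) hl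
    simp [InnerProductSpace.toDual_apply_apply] at this
    exact this
  have hslope := hφconv.le_slope_of_hasDerivAt (mem_univ 0) (mem_univ 1)
    one_pos hd
  have : slope φ 0 1 = f (x + v) - f x := by
    simp [slope_def_field, φ]
  linarith [hslope.trans_eq this]

theorem stmt_15 {d : ℕ} (f : EuclideanSpace ℝ (Fin d) → ℝ)
    (gradf : EuclideanSpace ℝ (Fin d) → EuclideanSpace ℝ (Fin d))
    (hgrad : ∀ x, HasGradientAt f (gradf x) x)
    (μ L δ : ℝ) (hμ : 0 < μ) (hL : 0 < L) (hδ : 0 ≤ δ)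
    (hsc : ConvexOn ℝ Set.univ (fun x => f x - μ / 2 * ‖x‖ ^ 2))
    (hsmooth : ∀ x y, ‖gradf x - gradf y‖ ≤ L * ‖x - y‖)
    (x : EuclideanSpace ℝ (Fin d)) (fδ : ℝ) (gδ : EuclideanSpace ℝ (Fin d))
    (horacle : ∀ y, μ / 2 * ‖y - x‖ ^ 2 ≤ f y - fδ - inner ℝ gδ (y - x) ∧
        f y - fδ - (inner ℝ gδ (y - x) : ℝ) ≤ L / 2 * ‖y - x‖ ^ 2 + δ) :
    ‖gδ - gradf x‖ ^ 2 ≤ 2 * L * δ := by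
  -- f is convex
  have hconv : ConvexOn ℝ Set.univ f := by
    have hns : ConvexOn ℝ Set.univ (fun z : EuclideanSpace ℝ (Fin d) => μ / 2 * ‖z‖ ^ 2) := by
      have h1 : ConvexOn ℝ Set.univ (fun z : EuclideanSpace ℝ (Fin d) => ‖z‖ ^ 2) := by
        refine ⟨convex_univ, fun p _ q _ a b ha hb hab => ?_⟩
        simp only [smul_eq_mul]
        have expand : ‖a • p + b • q‖ ^ 2
            = a ^ 2 * ‖p‖ ^ 2 + 2 * (a * b * inner ℝ p q) + b ^ 2 * ‖q‖ ^ 2 := by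
          rw [norm_add_sq_real, real_inner_smul_left, real_inner_smul_right,
            norm_smul, norm_smul]
          simp [Real.norm_eq_abs, abs_of_nonneg ha, abs_of_nonneg hb, mul_pow]
          ring
        rw [expand]
        nlinarith [real_inner_le_norm p q, mul_nonneg ha hb, norm_nonneg p, norm_nonneg q,
          sq_nonneg (‖p‖ - ‖q‖), sq_nonneg (a * ‖p‖ - b * ‖q‖), mul_nonneg ha (norm_nonneg p),
          mul_nonneg hb (norm_nonneg q)]
      have := ConvexOn.smul (show (0:ℝ) ≤ μ / 2 by positivity) h1
      simpa [smul_eq_mul] using this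
    have h2 := hsc.add hns
    convert h2 using 1
    pick_goal -1
    funext z
    simp
    all_goals rfl
  -- oracle at y = x
  have hx0 := horacle x
  simp at hx0
  -- key inequality: ∀ y, ⟪gradf x - gδ, y - x⟫ ≤ L/2 ‖y-x‖² + δ
  have key : ∀ v : EuclideanSpace ℝ (Fin d),
      (inner ℝ (gradf x - gδ) v : ℝ) ≤ L / 2 * ‖v‖ ^ 2 + δ := by
    intro v
    have h1 : (inner ℝ (gradf x) v : ℝ) ≤ f (x + v) - f x :=
      grad_le_sub_aux hconv (hgrad x) v
    have h2 := (horacle (x + v)).2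
    have h3 : x + v - x = v := by abel
    rw [h3] at h2
    have h4 : fδ ≤ f x := by linarith [hx0.1]
    rw [inner_sub_left]
    linarith
  -- specialize v = (1/L) • (gradf x - gδ)
  set h := gradf x - gδ with hh
  have hk := key ((1 / L) • h)
  rw [inner_smul_right, norm_smul] at hk
  have hnh : ‖gδ - gradf x‖ = ‖h‖ := by rw [hh, norm_sub_rev]
  rw [hnh]
  have hip : (inner ℝ h h : ℝ) = ‖h‖ ^ 2 := real_inner_self_eq_norm_sq h
  have hL' : L ≠ 0 := ne_of_gt hL
  rw [hip] at hk
  have : ‖(1 / L : ℝ)‖ = 1 / L := by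
    rw [Real.norm_eq_abs, abs_of_pos (by positivity)]
  rw [this] at hk
  have hexp : L / 2 * (1 / L * ‖h‖) ^ 2 = ‖h‖ ^ 2 / (2 * L) := by
    field_simp
  rw [hexp] at hk
  -- 1/L * ‖h‖² ≤ ‖h‖²/(2L) + δ
  have : ‖h‖ ^ 2 / (2 * L) ≤ δ := by
    have e : 1 / L * ‖h‖ ^ 2 - ‖h‖ ^ 2 / (2 * L) = ‖h‖ ^ 2 / (2 * L) := by
      field_simp; ring
    linarith
  calc ‖h‖ ^ 2 = (2 * L) * (‖h‖ ^ 2 / (2 * L)) := by field_simp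
    _ ≤ 2 * L * δ := by
        apply mul_le_mul_of_nonneg_left this (by positivity)
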